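/- The vector fields X = λ∂₁ − u₁∂₂ and Y = ∂₃ + (λ − u₂)∂₂ commute for all λ ≠ 0 if and only if u satisfies u₁₃ + u₁u₂₂ − u₂u₁₂ = 0. -/

import Mathlib

/-- Partial derivative in the `i`-th coordinate direction. -/
noncomputable def pd (i : Fin 3) (f : (Fin 3 → ℝ) → ℝ) (x : Fin 3 → ℝ) : ℝ :=
  fderiv ℝ f x (Pi.single i 1)

/-- Lie bracket of vector fields on `ℝ³`, given by their coefficient functions. -/
noncomputable def lieBracket (X Y : (Fin 3 → ℝ) → Fin 3 → ℝ)
    (x : Fin 3 → ℝ) (i : Fin 3) : ℝ :=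
  ∑ j : Fin 3, (X x j * pd j (fun y => Y y i) x - Y x j * pd j (fun y => X y i) x)

lemma pd_diff {u : (Fin 3 → ℝ) → ℝ} (hu : ContDiff ℝ 2 u) (j : Fin 3) :
    Differentiable ℝ (pd j u) := by
  have h := (hu.fderiv_right (m := 1) le_rfl).differentiable one_ne_zero
  exact fun x => (h x).clm_apply (differentiableAt_const _)

lemma pd_comm {u : (Fin 3 → ℝ) → ℝ} (hu : ContDiff ℝ 2 u) (i j : Fin 3) (x : Fin 3 → ℝ) :
    pd i (pd j u) x = pd j (pd i u) x := by
  have hsymm : IsSymmSndFDerivAt ℝ u x := hu.contDiffAt.isSymmSndFDerivAt (by norm_num)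
  have hfd : DifferentiableAt ℝ (fderiv ℝ u) x :=
    ((hu.fderiv_right (m := 1) le_rfl).differentiable one_ne_zero) x
  have key : ∀ a b : Fin 3,
      pd a (pd b u) x = fderiv ℝ (fderiv ℝ u) x (Pi.single a 1) (Pi.single b 1) := by
    intro a b
    unfold pd
    rw [fderiv_clm_apply hfd (differentiableAt_const _)]
    simp
  rw [key, key, hsymm.eq]

lemma bracket_val {u : (Fin 3 → ℝ) → ℝ} (hu : ContDiff ℝ 2 u) (l : ℝ) (x : Fin 3 → ℝ) :
    lieBracket (fun x => ![l, -(pd 0 u x), 0]) (fun x => ![0, l - pd 1 u x, 1]) x 1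
      = pd 0 (pd 2 u) x + pd 0 u x * pd 1 (pd 1 u) x - pd 1 u x * pd 0 (pd 1 u) x := by
  have hc : ∀ (j : Fin 3) (c : ℝ), pd j (fun _ => c) x = 0 := by
    intro j c; simp [pd]
  have hneg : ∀ j : Fin 3, pd j (fun y => -(pd 0 u y)) x = -pd j (pd 0 u) x := by
    intro j; simp only [pd, fderiv_fun_neg]; rfl
  have hsub : ∀ j : Fin 3, pd j (fun y => l - pd 1 u y) x = -pd j (pd 1 u) x := by
    intro j; simp only [pd, fderiv_const_sub]; rfl
  simp only [lieBracket, Fin.sum_univ_three]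
  simp only [Matrix.cons_val_zero, Matrix.cons_val_one, Matrix.head_cons,
    Matrix.cons_val_two, Matrix.tail_cons]
  rw [hsub 0, hsub 1, hneg 1, hneg 2, pd_comm hu 1 0, pd_comm hu 2 0]
  ring


/-- The vector fields `X = λ∂₁ − u₁∂₂` and `Y = ∂₃ + (λ − u₂)∂₂` commute for all
`λ ≠ 0` iff `u` satisfies `u₁₃ + u₁u₂₂ − u₂u₁₂ = 0`. -/
theorem lax_pair_33
    (u : (Fin 3 → ℝ) → ℝ) (hu : ContDiff ℝ 2 u) :
    (∀ l : ℝ, l ≠ 0 → ∀ x, ∀ i : Fin 3,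
      lieBracket
        (fun x => ![l, -(pd 0 u x), 0])
        (fun x => ![0, l - pd 1 u x, 1])
        x i = 0) ↔
    (∀ x, pd 0 (pd 2 u) x + pd 0 u x * pd 1 (pd 1 u) x
        - pd 1 u x * pd 0 (pd 1 u) x = 0) := by
  constructor
  · intro h x
    rw [← bracket_val hu 1 x]
    exact h 1 one_ne_zero x 1
  · intro h l hl x i
    fin_cases i
    · simp [lieBracket, Fin.sum_univ_three, pd]
    · rw [show (⟨1, by norm_num⟩ : Fin 3) = 1 from rfl, bracket_val hu l x]
      exact h x
    · simp [lieBracket, Fin.sum_univ_three, pd]
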